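/- arXiv:2012.01656 — 2 statements merged into one kernel-verified Lean document; each statement's English description precedes it below -/
import Mathlib

section
/- Constraint-preserving application conditions (cpres): let p = ⟨L ↩ K ↪ R⟩ be a rule of finite directed multigraphs and let d be a constraint (a condition over the empty graph). Then there exists a condition ac over L such that for every direct transformation G ⇒_{p,g,h} H: the match g satisfies ac if and only if (G satisfies d implies H satisfies d). In particular, the rule p equipped with the application condition ac is d-preserving: every transformation whose match satisfies ac sends graphs satisfying d to graphs satisfying d. -/
/-- A directed multigraph: a set of nodes, a set of edges, and source/target maps. -/
structure DMGraph : Type 1 where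
  V : Type
  E : Type
  s : E → V
  t : E → V

/-- A morphism of directed multigraphs: maps on nodes and edges compatible with
sources and targets. -/
structure GraphHom (G H : DMGraph) : Type where
  fV : G.V → H.V
  fE : G.E → H.E
  src : ∀ e, H.s (fE e) = fV (G.s e)
  tgt : ∀ e, H.t (fE e) = fV (G.t e)

/-- Composition of graph morphisms. -/
def GraphHom.comp {G H K : DMGraph} (g : GraphHom H K) (f : GraphHom G H) :
    GraphHom G K where
  fV := g.fV ∘ f.fV
  fE := g.fE ∘ f.fE
  src e := by simp [g.src, f.src]
  tgt e := by simp [g.tgt, f.tgt]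

/-- A graph morphism is injective if it is injective on nodes and on edges. -/
def GraphHom.Injective {G H : DMGraph} (f : GraphHom G H) : Prop :=
  Function.Injective f.fV ∧ Function.Injective f.fE

/-- A graph is finite if its node set and edge set are finite. -/
def DMGraph.Finite (G : DMGraph) : Prop :=
  _root_.Finite G.V ∧ _root_.Finite G.E

/-- Nested graph conditions over a graph `A`: `true`, existential conditions
`∃(a, c)` along an injective morphism `a : A → C` into a finite graph `C`,
negation, and (binary) conjunction. -/
inductive Cond : DMGraph → Type 1 where
  | tru (A : DMGraph) : Cond A
  | ex {A C : DMGraph} (a : GraphHom A C) (hC : C.Finite) (ha : a.Injective)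
      (c : Cond C) : Cond A
  | not {A : DMGraph} (c : Cond A) : Cond A
  | and {A : DMGraph} (c₁ c₂ : Cond A) : Cond A

/-- Satisfaction of a condition over `A` by a morphism `A → G`. -/
def Sat {G : DMGraph} : {A : DMGraph} → GraphHom A G → Cond A → Prop
  | _, _, Cond.tru _ => True
  | _, p, Cond.ex a _ _ c => ∃ q, GraphHom.Injective q ∧ q.comp a = p ∧ Sat q c
  | _, p, Cond.not c => ¬ Sat p c
  | _, p, Cond.and c₁ c₂ => Sat p c₁ ∧ Sat p c₂

/-- A commuting square of graph morphisms is a pushout square if it commutes and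
satisfies the universal property of pushouts in the category of directed
multigraphs. -/
structure IsPushoutSq {A B C D : DMGraph} (f : GraphHom A B) (g : GraphHom A C)
    (h : GraphHom B D) (i : GraphHom C D) : Prop where
  comm : h.comp f = i.comp g
  desc : ∀ {Z : DMGraph} (u : GraphHom B Z) (v : GraphHom C Z), u.comp f = v.comp g →
    ∃! w : GraphHom D Z, w.comp h = u ∧ w.comp i = v

/-- The empty directed multigraph. -/
def DMGraph.empty : DMGraph where
  V := PEmpty
  E := PEmpty
  s := PEmpty.elim
  t := PEmpty.elim

/-- The unique morphism from the empty graph into any graph. -/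
def emptyHom (G : DMGraph) : GraphHom DMGraph.empty G where
  fV := PEmpty.elim
  fE := PEmpty.elim
  src e := e.elim
  tgt e := e.elim

/-- A graph satisfies a constraint (a condition over the empty graph) iff the unique
morphism from the empty graph satisfies it. -/
def GSat (G : DMGraph) (d : Cond DMGraph.empty) : Prop :=
  Sat (emptyHom G) d


/- Basic lemmas -/
theorem GraphHom.ext' {G H : DMGraph} {f g : GraphHom G H}
    (hV : f.fV = g.fV) (hE : f.fE = g.fE) : f = g := by
  cases f; cases g; simp_all

@[simp] theorem comp_fV {G H K : DMGraph} (g : GraphHom H K) (f : GraphHom G H) :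
    (g.comp f).fV = g.fV ∘ f.fV := rfl

@[simp] theorem comp_fE {G H K : DMGraph} (g : GraphHom H K) (f : GraphHom G H) :
    (g.comp f).fE = g.fE ∘ f.fE := rfl

theorem emptyHom_unique {G : DMGraph} (f g : GraphHom DMGraph.empty G) : f = g := by
  apply GraphHom.ext' <;> funext x <;> exact x.elim

theorem GraphHom.Injective.comp {G H K : DMGraph} {g : GraphHom H K} {f : GraphHom G H}
    (hg : g.Injective) (hf : f.Injective) : (g.comp f).Injective :=
  ⟨hg.1.comp hf.1, hg.2.comp hf.2⟩

/-- The key set-level characterization of pushout squares (per component). -/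
structure POfun {α β γ δ : Type} (f : α → β) (g : α → γ) (h : β → δ) (i : γ → δ) : Prop where
  injf : Function.Injective f
  injg : Function.Injective g
  injh : Function.Injective h
  inji : Function.Injective i
  comm : ∀ a, h (f a) = i (g a)
  surj : ∀ d, (∃ b, h b = d) ∨ (∃ c, i c = d)
  pull : ∀ b c, h b = i c → ∃ a, f a = b ∧ g a = c

/-- Pasting: if the left square and the outer rectangle are pushout-like, so is
the right square. -/
theorem POfun.paste {α β γ δ ε ζ : Type}
    {f : α → β} {y : α → γ} {a' : β → δ} {y' : γ → δ}
    {m : γ → ε} {q' : δ → ζ} {dG : ε → ζ}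
    (left : POfun f y a' y') (injm : Function.Injective m)
    (outer : POfun f (m ∘ y) (q' ∘ a') dG)
    (comm2 : ∀ v, q' (y' v) = dG (m v)) : POfun y' m q' dG := by
  constructor
  · exact left.inji
  · exact injm
  · -- q' injective
    intro x x' hxx
    rcases left.surj x with ⟨b, rfl⟩ | ⟨v, rfl⟩ <;>
      rcases left.surj x' with ⟨b', rfl⟩ | ⟨v', rfl⟩
    · exact congrArg a' (outer.injh (show (q' ∘ a') b = (q' ∘ a') b' from hxx))
    · -- q' (a' b) = q' (y' v')
      rw [comm2] at hxx
      obtain ⟨k, hk1, hk2⟩ := outer.pull b (m v') hxx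
      have : v' = y k := injm (hk2.symm)
      subst this
      rw [← hk1, left.comm]
    · rw [comm2] at hxx
      obtain ⟨k, hk1, hk2⟩ := outer.pull b' (m v) hxx.symm
      have : v = y k := injm (hk2.symm)
      subst this
      rw [← hk1, left.comm]
    · rw [comm2, comm2] at hxx
      exact congrArg y' (injm (outer.inji hxx))
  · exact outer.inji
  · exact comm2
  · intro d
    rcases outer.surj d with ⟨b, hb⟩ | ⟨e, he⟩
    · exact Or.inl ⟨a' b, hb⟩
    · exact Or.inr ⟨e, he⟩
  · intro x e hxe
    rcases left.surj x with ⟨b, rfl⟩ | ⟨v, rfl⟩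
    · obtain ⟨k, hk1, hk2⟩ := outer.pull b e hxe
      exact ⟨y k, by rw [← hk1, left.comm], hk2⟩
    · rw [comm2] at hxe
      exact ⟨v, rfl, outer.inji hxe⟩
def idHom (G : DMGraph) : GraphHom G G := ⟨id, id, fun _ => rfl, fun _ => rfl⟩

@[simp] theorem idHom_comp {G H : DMGraph} (f : GraphHom G H) : (idHom H).comp f = f := by
  apply GraphHom.ext' <;> rfl

@[simp] theorem comp_idHom {G H : DMGraph} (f : GraphHom G H) : f.comp (idHom G) = f := by
  apply GraphHom.ext' <;> rfl

theorem comp_assoc {G H K M : DMGraph} (h : GraphHom K M) (g : GraphHom H K) (f : GraphHom G H) :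
    (h.comp g).comp f = h.comp (g.comp f) := by
  apply GraphHom.ext' <;> rfl

/-- Pushout-square data at the graph level: the set-level characterization holds
on nodes and on edges. -/
def POGraph {A B C D : DMGraph} (f : GraphHom A B) (g : GraphHom A C)
    (h : GraphHom B D) (i : GraphHom C D) : Prop :=
  POfun f.fV g.fV h.fV i.fV ∧ POfun f.fE g.fE h.fE i.fE

open Classical in
/-- the mediating map, at the level of functions -/
noncomputable def POfun.w {α β γ δ ζ : Type} {f : α → β} {g : α → γ} {h : β → δ} {i : γ → δ}
    (po : POfun f g h i) (u : β → ζ) (v : γ → ζ) : δ → ζ :=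
  fun d => if hd : ∃ b, h b = d then u hd.choose
    else v ((po.surj d).resolve_left hd).choose

theorem POfun.w_h {α β γ δ ζ : Type} {f : α → β} {g : α → γ} {h : β → δ} {i : γ → δ}
    (po : POfun f g h i) {u : β → ζ} {v : γ → ζ} (hu : ∀ a, u (f a) = v (g a)) (b : β) :
    po.w u v (h b) = u b := by
  have hd : ∃ b', h b' = h b := ⟨b, rfl⟩
  simp only [POfun.w, dif_pos hd]
  exact congrArg u (po.injh hd.choose_spec)

theorem POfun.w_i {α β γ δ ζ : Type} {f : α → β} {g : α → γ} {h : β → δ} {i : γ → δ}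
    (po : POfun f g h i) {u : β → ζ} {v : γ → ζ} (hu : ∀ a, u (f a) = v (g a)) (c : γ) :
    po.w u v (i c) = v c := by
  by_cases hd : ∃ b, h b = i c
  · simp only [POfun.w, dif_pos hd]
    obtain ⟨a, ha1, ha2⟩ := po.pull hd.choose c hd.choose_spec
    rw [← ha1, hu, ha2]
  · simp only [POfun.w, dif_neg hd]
    exact congrArg v (po.inji ((po.surj (i c)).resolve_left hd).choose_spec)

/-- From the set-level characterization to the universal property. -/
theorem POGraph.isPushoutSq {A B C D : DMGraph} {f : GraphHom A B} {g : GraphHom A C}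
    {h : GraphHom B D} {i : GraphHom C D} (po : POGraph f g h i) :
    IsPushoutSq f g h i := by
  obtain ⟨poV, poE⟩ := po
  constructor
  · apply GraphHom.ext'
    · funext a; exact poV.comm a
    · funext a; exact poE.comm a
  · intro Z u v huv
    have huV : ∀ a, u.fV (f.fV a) = v.fV (g.fV a) := fun a => congrFun (congrArg GraphHom.fV huv) a
    have huE : ∀ a, u.fE (f.fE a) = v.fE (g.fE a) := fun a => congrFun (congrArg GraphHom.fE huv) a
    refine ⟨⟨poV.w u.fV v.fV, poE.w u.fE v.fE, ?_, ?_⟩, ⟨?_, ?_⟩, ?_⟩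
    · intro ε
      rcases poE.surj ε with ⟨e, rfl⟩ | ⟨e, rfl⟩
      · rw [poE.w_h huE, u.src, h.src, poV.w_h huV]
      · rw [poE.w_i huE, v.src, i.src, poV.w_i huV]
    · intro ε
      rcases poE.surj ε with ⟨e, rfl⟩ | ⟨e, rfl⟩
      · rw [poE.w_h huE, u.tgt, h.tgt, poV.w_h huV]
      · rw [poE.w_i huE, v.tgt, i.tgt, poV.w_i huV]
    · apply GraphHom.ext'
      · funext b; exact poV.w_h huV b
      · funext b; exact poE.w_h huE b
    · apply GraphHom.ext'
      · funext c; exact poV.w_i huV c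
      · funext c; exact poE.w_i huE c
    · rintro w' ⟨hw1, hw2⟩
      apply GraphHom.ext'
      · funext d
        rcases poV.surj d with ⟨b, rfl⟩ | ⟨c, rfl⟩
        · show w'.fV (h.fV b) = poV.w u.fV v.fV (h.fV b)
          rw [poV.w_h huV]; exact congrFun (congrArg GraphHom.fV hw1) b
        · show w'.fV (i.fV c) = poV.w u.fV v.fV (i.fV c)
          rw [poV.w_i huV]; exact congrFun (congrArg GraphHom.fV hw2) c
      · funext d
        rcases poE.surj d with ⟨b, rfl⟩ | ⟨c, rfl⟩
        · show w'.fE (h.fE b) = poE.w u.fE v.fE (h.fE b)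
          rw [poE.w_h huE]; exact congrFun (congrArg GraphHom.fE hw1) b
        · show w'.fE (i.fE c) = poE.w u.fE v.fE (i.fE c)
          rw [poE.w_i huE]; exact congrFun (congrArg GraphHom.fE hw2) c
open Classical in
/-- canonical injection of `γ` into the concrete pushout carrier -/
noncomputable def pfun {α β γ : Type} (f : α → β) (g : α → γ) :
    γ → β ⊕ {c : γ // c ∉ Set.range g} :=
  fun c => if hc : c ∈ Set.range g then .inl (f hc.choose) else .inr ⟨c, hc⟩

theorem pfun_g {α β γ : Type} (f : α → β) {g : α → γ} (hg : Function.Injective g) (a : α) :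
    pfun f g (g a) = .inl (f a) := by
  have hc : g a ∈ Set.range g := ⟨a, rfl⟩
  simp only [pfun, dif_pos hc]
  exact congrArg (fun x => Sum.inl (f x)) (hg hc.choose_spec)

theorem pfun_not {α β γ : Type} (f : α → β) {g : α → γ} {c : γ} (hc : c ∉ Set.range g) :
    pfun f g c = .inr ⟨c, hc⟩ := by
  simp only [pfun, dif_neg hc]

theorem POfun.concrete {α β γ : Type} {f : α → β} {g : α → γ}
    (hf : Function.Injective f) (hg : Function.Injective g) :
    POfun f g Sum.inl (pfun f g) := by
  constructor
  · exact hf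
  · exact hg
  · exact fun a b => Sum.inl.inj
  · intro c c' hcc
    by_cases hc : c ∈ Set.range g <;> by_cases hc' : c' ∈ Set.range g
    · obtain ⟨a, rfl⟩ := hc; obtain ⟨a', rfl⟩ := hc'
      rw [pfun_g f hg, pfun_g f hg] at hcc
      exact congrArg g (hf (Sum.inl.inj hcc))
    · obtain ⟨a, rfl⟩ := hc; rw [pfun_g f hg, pfun_not f hc'] at hcc; simp at hcc
    · obtain ⟨a', rfl⟩ := hc'; rw [pfun_not f hc, pfun_g f hg] at hcc; simp at hcc
    · rw [pfun_not f hc, pfun_not f hc'] at hcc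
      exact congrArg Subtype.val (Sum.inr.inj hcc)
  · exact fun a => (pfun_g f hg a).symm
  · intro d
    rcases d with b | ⟨c, hc⟩
    · exact Or.inl ⟨b, rfl⟩
    · exact Or.inr ⟨c, pfun_not f hc⟩
  · intro b c hbc
    by_cases hc : c ∈ Set.range g
    · obtain ⟨a, rfl⟩ := hc
      rw [pfun_g f hg] at hbc
      exact ⟨a, (Sum.inl.inj hbc).symm, rfl⟩
    · rw [pfun_not f hc] at hbc; simp at hbc

/-- The concrete pushout graph of a span of injective graph morphisms. -/
noncomputable def PGraph {A B C : DMGraph} (f : GraphHom A B) (g : GraphHom A C) : DMGraph where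
  V := B.V ⊕ {v : C.V // v ∉ Set.range g.fV}
  E := B.E ⊕ {e : C.E // e ∉ Set.range g.fE}
  s := fun e => match e with
    | .inl e => .inl (B.s e)
    | .inr ⟨e, _⟩ => pfun f.fV g.fV (C.s e)
  t := fun e => match e with
    | .inl e => .inl (B.t e)
    | .inr ⟨e, _⟩ => pfun f.fV g.fV (C.t e)

noncomputable def Pinl {A B C : DMGraph} (f : GraphHom A B) (g : GraphHom A C) :
    GraphHom B (PGraph f g) where
  fV := Sum.inl
  fE := Sum.inl
  src _ := rfl
  tgt _ := rfl

noncomputable def Pinr {A B C : DMGraph} (f : GraphHom A B) (g : GraphHom A C)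
    (hf : f.Injective) (hg : g.Injective) : GraphHom C (PGraph f g) where
  fV := pfun f.fV g.fV
  fE := pfun f.fE g.fE
  src e := by
    by_cases he : e ∈ Set.range g.fE
    · obtain ⟨ε, rfl⟩ := he
      rw [pfun_g f.fE hg.2]
      show Sum.inl (B.s (f.fE ε)) = _
      rw [f.src ε, g.src ε, pfun_g f.fV hg.1]
    · rw [pfun_not f.fE he]; rfl
  tgt e := by
    by_cases he : e ∈ Set.range g.fE
    · obtain ⟨ε, rfl⟩ := he
      rw [pfun_g f.fE hg.2]
      show Sum.inl (B.t (f.fE ε)) = _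
      rw [f.tgt ε, g.tgt ε, pfun_g f.fV hg.1]
    · rw [pfun_not f.fE he]; rfl

theorem PGraph_po {A B C : DMGraph} (f : GraphHom A B) (g : GraphHom A C)
    (hf : f.Injective) (hg : g.Injective) :
    POGraph f g (Pinl f g) (Pinr f g hf hg) :=
  ⟨POfun.concrete hf.1 hg.1, POfun.concrete hf.2 hg.2⟩

theorem PGraph_finite {A B C : DMGraph} (f : GraphHom A B) (g : GraphHom A C)
    (hB : B.Finite) (hC : C.Finite) : (PGraph f g).Finite := by
  obtain ⟨hB1, hB2⟩ := hB; obtain ⟨hC1, hC2⟩ := hC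
  constructor
  · show Finite (B.V ⊕ {v : C.V // v ∉ Set.range g.fV})
    infer_instance
  · show Finite (B.E ⊕ {e : C.E // e ∉ Set.range g.fE})
    infer_instance
theorem POfun.transfer {α β γ δ π : Type} {f : α → β} {g : α → γ}
    {h' : β → π} {i' : γ → π} (po : POfun f g h' i')
    {h : β → δ} {i : γ → δ} {w : δ → π} {w' : π → δ}
    (hw : ∀ d, w' (w d) = d) (hwh : ∀ b, w (h b) = h' b) (hwi : ∀ c, w (i c) = i' c) :
    POfun f g h i := by
  have winj : Function.Injective w := fun x y hxy => by rw [← hw x, hxy, hw]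
  constructor
  · exact po.injf
  · exact po.injg
  · intro b b' hbb
    exact po.injh (by rw [← hwh, ← hwh, hbb])
  · intro c c' hcc
    exact po.inji (by rw [← hwi, ← hwi, hcc])
  · intro a
    apply winj
    rw [hwh, hwi, po.comm]
  · intro d
    rcases po.surj (w d) with ⟨b, hb⟩ | ⟨c, hc⟩
    · exact Or.inl ⟨b, winj (by rw [hwh, hb])⟩
    · exact Or.inr ⟨c, winj (by rw [hwi, hc])⟩
  · intro b c hbc
    exact po.pull b c (by rw [← hwh, ← hwi, hbc])

theorem IsPushoutSq.poGraph {A B C D : DMGraph} {f : GraphHom A B} {g : GraphHom A C}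
    {h : GraphHom B D} {i : GraphHom C D} (hf : f.Injective) (hg : g.Injective)
    (po : IsPushoutSq f g h i) : POGraph f g h i := by
  have poPd := PGraph_po f g hf hg
  have poP : IsPushoutSq f g (Pinl f g) (Pinr f g hf hg) := poPd.isPushoutSq
  obtain ⟨w, ⟨hw1, hw2⟩, -⟩ := po.desc (Pinl f g) (Pinr f g hf hg) poP.comm
  obtain ⟨w', ⟨hw1', hw2'⟩, -⟩ := poP.desc h i po.comm
  have e1 : w'.comp w = idHom D := by
    refine ((po.desc h i po.comm).unique ?_ ?_ : w'.comp w = idHom D)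
    · exact ⟨by rw [comp_assoc, hw1, hw1'], by rw [comp_assoc, hw2, hw2']⟩
    · exact ⟨idHom_comp h, idHom_comp i⟩
  have hwV : ∀ d, w'.fV (w.fV d) = d := fun d => congrFun (congrArg GraphHom.fV e1) d
  have hwE : ∀ d, w'.fE (w.fE d) = d := fun d => congrFun (congrArg GraphHom.fE e1) d
  constructor
  · exact POfun.transfer (POfun.concrete hf.1 hg.1) hwV
      (fun b => congrFun (congrArg GraphHom.fV hw1) b)
      (fun c => congrFun (congrArg GraphHom.fV hw2) c)
  · exact POfun.transfer (POfun.concrete hf.2 hg.2) hwE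
      (fun b => congrFun (congrArg GraphHom.fE hw1) b)
      (fun c => congrFun (congrArg GraphHom.fE hw2) c)
/-! ### Condition utilities -/

def FalseCond (A : DMGraph) : Cond A := Cond.not (Cond.tru A)

theorem sat_falseCond {A G : DMGraph} (p : GraphHom A G) : ¬ Sat p (FalseCond A) := by
  simp [FalseCond, Sat]

def bigOr {A : DMGraph} : List (Cond A) → Cond A
  | [] => FalseCond A
  | c :: cs => Cond.not (Cond.and (Cond.not c) (Cond.not (bigOr cs)))

theorem sat_bigOr {A G : DMGraph} (p : GraphHom A G) :
    ∀ (L : List (Cond A)), Sat p (bigOr L) ↔ ∃ c ∈ L, Sat p c := by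
  intro L
  induction L with
  | nil => simp [bigOr, FalseCond, Sat]
  | cons c cs ih =>
    simp only [bigOr, Sat, List.mem_cons]
    constructor
    · intro hsat
      rcases Classical.em (Sat p c) with hc | hc
      · exact ⟨c, Or.inl rfl, hc⟩
      · rcases Classical.em (Sat p (bigOr cs)) with hcs | hcs
        · obtain ⟨c', hc', hsc'⟩ := ih.mp hcs
          exact ⟨c', Or.inr hc', hsc'⟩
        · exact absurd ⟨hc, hcs⟩ hsat
    · rintro ⟨c', hc' | hc', hsc'⟩ hcon
      · exact hcon.1 (hc' ▸ hsc')
      · exact hcon.2 (ih.mpr ⟨c', hc', hsc'⟩)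

/-- Case analysis on an option-valued function, keeping the proof in the `none` case. -/
def optElim {X Y : Type} (f : X → Option Y) (x : X) : Y ⊕ {x' : X // f x' = none} :=
  match hx : f x with
  | some y => .inl y
  | none => .inr ⟨x, hx⟩

theorem optElim_some {X Y : Type} {f : X → Option Y} {x : X} {y : Y} (h : f x = some y) :
    optElim f x = .inl y := by
  unfold optElim
  split <;> simp_all

theorem optElim_none {X Y : Type} {f : X → Option Y} {x : X} (h : f x = none) :
    optElim f x = .inr ⟨x, h⟩ := by
  unfold optElim
  split <;> simp_all
/-! ### Overlap data for the Shift construction -/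

section Theta

variable {A C A' : DMGraph} (a : GraphHom A C) (b : GraphHom A A')

/-- The defining property of an overlap pattern between `C` and `A'` over `A`. -/
def ThetaP (θV : C.V → Option A'.V) (θE : C.E → Option A'.E) : Prop :=
  (∀ y y' x, θV y = some x → θV y' = some x → y = y') ∧
  (∀ e e', θE e = some e' → θV (C.s e) = some (A'.s e') ∧ θV (C.t e) = some (A'.t e')) ∧
  (∀ x, θV (a.fV x) = some (b.fV x)) ∧
  (∀ x, θE (a.fE x) = some (b.fE x)) ∧
  (∀ e e' x, θE e = some x → θE e' = some x → e = e')

/-- An overlap pattern between `C` and `A'` over `A`. -/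
def Theta : Type :=
  {p : (C.V → Option A'.V) × (C.E → Option A'.E) // ThetaP a b p.1 p.2}

theorem theta_finite (hC : C.Finite) (hA' : A'.Finite) : Finite (Theta a b) := by
  haveI := hC.1; haveI := hC.2; haveI := hA'.1; haveI := hA'.2
  haveI := Fintype.ofFinite C.V; haveI := Fintype.ofFinite C.E
  haveI := Fintype.ofFinite A'.V; haveI := Fintype.ofFinite A'.E
  haveI := Classical.decEq C.V; haveI := Classical.decEq C.E
  haveI : Finite ((C.V → Option A'.V) × (C.E → Option A'.E)) := Finite.of_fintype _
  unfold Theta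
  exact Subtype.finite

/-- A list containing all overlap patterns. -/
noncomputable def thetaList (hC : C.Finite) (hA' : A'.Finite) : List (Theta a b) :=
  (@Finset.univ _ (@Fintype.ofFinite _ (theta_finite a b hC hA'))).toList

theorem mem_thetaList (hC : C.Finite) (hA' : A'.Finite) (θ : Theta a b) :
    θ ∈ thetaList a b hC hA' :=
  Finset.mem_toList.mpr (@Finset.mem_univ _ (@Fintype.ofFinite _ (theta_finite a b hC hA')) θ)

/-- The overlap graph determined by an overlap pattern. -/
def EG (θ : Theta a b) : DMGraph where
  V := A'.V ⊕ {v : C.V // θ.1.1 v = none}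
  E := A'.E ⊕ {e : C.E // θ.1.2 e = none}
  s := fun e => match e with
    | .inl e => .inl (A'.s e)
    | .inr ⟨e, _⟩ => optElim θ.1.1 (C.s e)
  t := fun e => match e with
    | .inl e => .inl (A'.t e)
    | .inr ⟨e, _⟩ => optElim θ.1.1 (C.t e)

theorem EG_finite (θ : Theta a b) (hC : C.Finite) (hA' : A'.Finite) : (EG a b θ).Finite := by
  haveI := hC.1; haveI := hC.2; haveI := hA'.1; haveI := hA'.2
  constructor
  · show Finite (A'.V ⊕ {v : C.V // θ.1.1 v = none})
    haveI : Finite {v : C.V // θ.1.1 v = none} := Subtype.finite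
    infer_instance
  · show Finite (A'.E ⊕ {e : C.E // θ.1.2 e = none})
    haveI : Finite {e : C.E // θ.1.2 e = none} := Subtype.finite
    infer_instance

/-- The canonical injection of `A'` into the overlap graph. -/
def EGinl (θ : Theta a b) : GraphHom A' (EG a b θ) where
  fV := Sum.inl
  fE := Sum.inl
  src _ := rfl
  tgt _ := rfl

theorem EGinl_inj (θ : Theta a b) : (EGinl a b θ).Injective :=
  ⟨fun _ _ => Sum.inl.inj, fun _ _ => Sum.inl.inj⟩

/-- The canonical morphism of `C` into the overlap graph. -/
def EGr (θ : Theta a b) : GraphHom C (EG a b θ) where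
  fV := optElim θ.1.1
  fE := optElim θ.1.2
  src e := by
    cases he : θ.1.2 e with
    | some e' =>
      rw [optElim_some he, optElim_some (θ.2.2.1 e e' he).1]
      rfl
    | none =>
      rw [optElim_none he]
      rfl
  tgt e := by
    cases he : θ.1.2 e with
    | some e' =>
      rw [optElim_some he, optElim_some (θ.2.2.1 e e' he).2]
      rfl
    | none =>
      rw [optElim_none he]
      rfl

theorem optElim_inj {X Y : Type} {f : X → Option Y}
    (hinj : ∀ y y' x, f y = some x → f y' = some x → y = y') :
    Function.Injective (optElim f) := by
  intro v v' hvv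
  cases hv : f v with
  | some x =>
    cases hv' : f v' with
    | some x' =>
      rw [optElim_some hv, optElim_some hv'] at hvv
      exact hinj v v' x hv (by rw [hv', Sum.inl.inj hvv])
    | none => rw [optElim_some hv, optElim_none hv'] at hvv; simp at hvv
  | none =>
    cases hv' : f v' with
    | some x' => rw [optElim_none hv, optElim_some hv'] at hvv; simp at hvv
    | none =>
      rw [optElim_none hv, optElim_none hv'] at hvv
      exact congrArg Subtype.val (Sum.inr.inj hvv)

theorem EGr_inj (θ : Theta a b) : (EGr a b θ).Injective :=
  ⟨optElim_inj θ.2.1, optElim_inj θ.2.2.2.2.2⟩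

theorem EG_comm (θ : Theta a b) : (EGr a b θ).comp a = (EGinl a b θ).comp b := by
  apply GraphHom.ext'
  · funext x; exact optElim_some (θ.2.2.2.1 x)
  · funext x; exact optElim_some (θ.2.2.2.2.1 x)

end Theta
/-! ### The Shift construction -/

/-- Shifting a condition over `A` along a morphism `b : A → A'`. -/
noncomputable def Shift : {A : DMGraph} → Cond A → {A' : DMGraph} → GraphHom A A' → A'.Finite → Cond A'
  | _, .tru _, A', _, _ => .tru A'
  | _, .not c, _, b, hA' => .not (Shift c b hA')
  | _, .and c₁ c₂, _, b, hA' => .and (Shift c₁ b hA') (Shift c₂ b hA')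
  | _, @Cond.ex _ C a hC _ c, A', b, hA' =>
      bigOr ((thetaList a b hC hA').map (fun θ =>
        Cond.ex (EGinl a b θ) (EG_finite a b θ hC hA') (EGinl_inj a b θ)
          (Shift c (EGr a b θ) (EG_finite a b θ hC hA'))))

theorem Shift_sat : ∀ {A : DMGraph} (c : Cond A) {A' : DMGraph} (b : GraphHom A A')
    (hA' : A'.Finite) {G : DMGraph} (p' : GraphHom A' G), p'.Injective →
    (Sat p' (Shift c b hA') ↔ Sat (p'.comp b) c) := by
  intro A c
  induction c with
  | tru A => intro A' b hA' G p' hp'; simp [Shift, Sat]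
  | not c ih =>
    intro A' b hA' G p' hp'
    simp only [Shift, Sat]
    rw [ih b hA' p' hp']
  | and c₁ c₂ ih₁ ih₂ =>
    intro A' b hA' G p' hp'
    simp only [Shift, Sat]
    rw [ih₁ b hA' p' hp', ih₂ b hA' p' hp']
  | ex a hC ha c ih =>
    rename_i A₀ C₀
    intro A' b hA' G p' hp'
    simp only [Shift, Sat]
    rw [sat_bigOr]
    constructor
    · rintro ⟨cnd, hmem, hsat⟩
      rw [List.mem_map] at hmem
      obtain ⟨θ, -, rfl⟩ := hmem
      obtain ⟨r, hr_inj, hr_comp, hr_sat⟩ := hsat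
      refine ⟨r.comp (EGr _ _ θ), hr_inj.comp (EGr_inj _ _ θ), ?_, ?_⟩
      · rw [comp_assoc, EG_comm, ← comp_assoc, hr_comp]
      · rw [ih (EGr _ _ θ) (EG_finite _ _ θ hC hA') r hr_inj] at hr_sat
        exact hr_sat
    · rintro ⟨q, hq_inj, hq_comp, hq_sat⟩
      -- build the overlap pattern
      classical
      set θV : C₀.V → Option A'.V := fun v =>
        if hv : ∃ x, p'.fV x = q.fV v then some hv.choose else none with hθV
      set θE : C₀.E → Option A'.E := fun e =>
        if he : ∃ x, p'.fE x = q.fE e then some he.choose else none with hθE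
      have θV_some : ∀ {v x}, θV v = some x → p'.fV x = q.fV v := by
        intro v x hvx
        rw [hθV] at hvx
        simp only at hvx
        split at hvx
        · next hv => rw [← Option.some_inj.mp hvx]; exact hv.choose_spec
        · simp at hvx
      have θE_some : ∀ {e x}, θE e = some x → p'.fE x = q.fE e := by
        intro e x hex
        rw [hθE] at hex
        simp only at hex
        split at hex
        · next he => rw [← Option.some_inj.mp hex]; exact he.choose_spec
        · simp at hex
      have θV_eq : ∀ {v x}, p'.fV x = q.fV v → θV v = some x := by
        intro v x hx
        have hv : ∃ x, p'.fV x = q.fV v := ⟨x, hx⟩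
        rw [hθV]; simp only [dif_pos hv]
        exact congrArg some (hp'.1 (hv.choose_spec.trans hx.symm))
      have θE_eq : ∀ {e x}, p'.fE x = q.fE e → θE e = some x := by
        intro e x hx
        have he : ∃ x, p'.fE x = q.fE e := ⟨x, hx⟩
        rw [hθE]; simp only [dif_pos he]
        exact congrArg some (hp'.2 (he.choose_spec.trans hx.symm))
      have hqcV : ∀ x, q.fV (a.fV x) = p'.fV (b.fV x) :=
        fun x => congrFun (congrArg GraphHom.fV hq_comp) x
      have hqcE : ∀ x, q.fE (a.fE x) = p'.fE (b.fE x) :=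
        fun x => congrFun (congrArg GraphHom.fE hq_comp) x
      have hθ : ThetaP a b θV θE := by
        refine ⟨?_, ?_, ?_, ?_, ?_⟩
        · intro y y' x h1 h2
          exact hq_inj.1 ((θV_some h1).symm.trans (θV_some h2))
        · intro e e' hee
          have h1 : p'.fE e' = q.fE e := θE_some hee
          constructor
          · apply θV_eq
            rw [← q.src e, ← h1, p'.src e']
          · apply θV_eq
            rw [← q.tgt e, ← h1, p'.tgt e']
        · intro x; exact θV_eq (hqcV x).symm
        · intro x; exact θE_eq (hqcE x).symm
        · intro e e' x h1 h2
          exact hq_inj.2 ((θE_some h1).symm.trans (θE_some h2))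
      set θ : Theta a b := ⟨⟨θV, θE⟩, hθ⟩ with hθdef
      -- the morphism r from the overlap graph into G
      have rsrc : ∀ e : (EG a b θ).E,
          G.s (Sum.elim p'.fE (fun e => q.fE e.1) e) =
          Sum.elim p'.fV (fun v => q.fV v.1) ((EG a b θ).s e) := by
        rintro (e | ⟨e, he⟩)
        · exact p'.src e
        · show G.s (q.fE e) = Sum.elim p'.fV (fun v => q.fV v.1) (optElim θV (C₀.s e))
          rw [q.src e]
          cases hv : θV (C₀.s e) with
          | some x => rw [optElim_some hv]; exact (θV_some hv).symm
          | none => rw [optElim_none hv]; rfl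
      have rtgt : ∀ e : (EG a b θ).E,
          G.t (Sum.elim p'.fE (fun e => q.fE e.1) e) =
          Sum.elim p'.fV (fun v => q.fV v.1) ((EG a b θ).t e) := by
        rintro (e | ⟨e, he⟩)
        · exact p'.tgt e
        · show G.t (q.fE e) = Sum.elim p'.fV (fun v => q.fV v.1) (optElim θV (C₀.t e))
          rw [q.tgt e]
          cases hv : θV (C₀.t e) with
          | some x => rw [optElim_some hv]; exact (θV_some hv).symm
          | none => rw [optElim_none hv]; rfl
      set r : GraphHom (EG a b θ) G :=
        ⟨Sum.elim p'.fV (fun v => q.fV v.1), Sum.elim p'.fE (fun e => q.fE e.1),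
          rsrc, rtgt⟩ with hrdef
      have hr_inj : r.Injective := by
        constructor
        · rintro (x | ⟨v, hv⟩) (x' | ⟨v', hv'⟩) hxx
          · exact congrArg Sum.inl (hp'.1 hxx)
          · exact absurd (θV_eq (hxx : p'.fV x = q.fV v')) (by show θV v' ≠ some x; rw [show θV v' = none from hv']; simp)
          · exact absurd (θV_eq ((hxx : q.fV v = p'.fV x').symm)) (by show θV v ≠ some x'; rw [show θV v = none from hv]; simp)
          · exact congrArg Sum.inr (Subtype.ext (hq_inj.1 hxx))
        · rintro (x | ⟨e, he⟩) (x' | ⟨e', he'⟩) hxx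
          · exact congrArg Sum.inl (hp'.2 hxx)
          · exact absurd (θE_eq (hxx : p'.fE x = q.fE e')) (by show θE e' ≠ some x; rw [show θE e' = none from he']; simp)
          · exact absurd (θE_eq ((hxx : q.fE e = p'.fE x').symm)) (by show θE e ≠ some x'; rw [show θE e = none from he]; simp)
          · exact congrArg Sum.inr (Subtype.ext (hq_inj.2 hxx))
      have hr_comp : r.comp (EGinl a b θ) = p' := by
        apply GraphHom.ext' <;> rfl
      have hr_q : r.comp (EGr a b θ) = q := by
        apply GraphHom.ext'
        · funext v
          show Sum.elim p'.fV (fun v => q.fV v.1) (optElim θV v) = q.fV v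
          cases hv : θV v with
          | some x => rw [optElim_some hv]; exact θV_some hv
          | none => rw [optElim_none hv]; rfl
        · funext e
          show Sum.elim p'.fE (fun e => q.fE e.1) (optElim θE e) = q.fE e
          cases he : θE e with
          | some x => rw [optElim_some he]; exact θE_some he
          | none => rw [optElim_none he]; rfl
      refine ⟨Cond.ex (EGinl a b θ) (EG_finite a b θ hC hA') (EGinl_inj a b θ)
          (Shift c (EGr a b θ) (EG_finite a b θ hC hA')), ?_, ?_⟩
      · exact List.mem_map.mpr ⟨θ, mem_thetaList a b hC hA' θ, rfl⟩
      · refine ⟨r, hr_inj, hr_comp, ?_⟩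
        rw [ih (EGr a b θ) (EG_finite a b θ hC hA') r hr_inj, hr_q]
        exact hq_sat
/-! ### Pushout complements along the rule -/

theorem Pinl_inj {A B C : DMGraph} (f : GraphHom A B) (g : GraphHom A C) :
    (Pinl f g).Injective :=
  ⟨fun _ _ => Sum.inl.inj, fun _ _ => Sum.inl.inj⟩

theorem Pinr_inj {A B C : DMGraph} (f : GraphHom A B) (g : GraphHom A C)
    (hf : f.Injective) (hg : g.Injective) : (Pinr f g hf hg).Injective :=
  ⟨(POfun.concrete hf.1 hg.1).inji, (POfun.concrete hf.2 hg.2).inji⟩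

section Lconstr

variable {K' R' C : DMGraph} (a : GraphHom R' C) (r : GraphHom K' R')

/-- Nodes of `C` that would be deleted. -/
def delV : Set C.V := {v | ∃ ρ, ρ ∉ Set.range r.fV ∧ a.fV ρ = v}

/-- Edges of `C` that would be deleted. -/
def delE : Set C.E := {e | ∃ ε, ε ∉ Set.range r.fE ∧ a.fE ε = e}

/-- The dangling condition: the non-deleted part of `C` is closed under
sources and targets. -/
def Dangling : Prop :=
  ∀ e : C.E, e ∉ delE a r → C.s e ∉ delV a r ∧ C.t e ∉ delV a r

/-- The pushout complement of `K' → R' → C`. -/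
def Ygraph (hD : Dangling a r) : DMGraph where
  V := {v : C.V // v ∉ delV a r}
  E := {e : C.E // e ∉ delE a r}
  s e := ⟨C.s e.1, (hD e.1 e.2).1⟩
  t e := ⟨C.t e.1, (hD e.1 e.2).2⟩

theorem Ygraph_finite (hD : Dangling a r) (hC : C.Finite) : (Ygraph a r hD).Finite := by
  haveI := hC.1; haveI := hC.2
  exact ⟨Subtype.finite, Subtype.finite⟩

/-- Inclusion of the pushout complement into `C`. -/
def Yj (hD : Dangling a r) : GraphHom (Ygraph a r hD) C where
  fV := Subtype.val
  fE := Subtype.val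
  src _ := rfl
  tgt _ := rfl

theorem Yj_inj (hD : Dangling a r) : (Yj a r hD).Injective :=
  ⟨fun _ _ h => Subtype.ext h, fun _ _ h => Subtype.ext h⟩

theorem ar_not_delV (ha : a.Injective) (κ : K'.V) : a.fV (r.fV κ) ∉ delV a r := by
  rintro ⟨ρ, hρ, hρ2⟩
  exact hρ ⟨κ, (ha.1 hρ2).symm⟩

theorem ar_not_delE (ha : a.Injective) (κ : K'.E) : a.fE (r.fE κ) ∉ delE a r := by
  rintro ⟨ε, hε, hε2⟩
  exact hε ⟨κ, (ha.2 hε2).symm⟩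

/-- The morphism from the interface into the pushout complement. -/
def Yk (ha : a.Injective) (hD : Dangling a r) : GraphHom K' (Ygraph a r hD) where
  fV κ := ⟨a.fV (r.fV κ), ar_not_delV a r ha κ⟩
  fE κ := ⟨a.fE (r.fE κ), ar_not_delE a r ha κ⟩
  src κ := by
    apply Subtype.ext
    show C.s (a.fE (r.fE κ)) = a.fV (r.fV (K'.s κ))
    rw [a.src, r.src]
  tgt κ := by
    apply Subtype.ext
    show C.t (a.fE (r.fE κ)) = a.fV (r.fV (K'.t κ))
    rw [a.tgt, r.tgt]

theorem Yk_inj (ha : a.Injective) (hr : r.Injective) (hD : Dangling a r) :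
    (Yk a r ha hD).Injective := by
  constructor
  · intro x y hxy
    exact hr.1 (ha.1 (congrArg Subtype.val hxy))
  · intro x y hxy
    exact hr.2 (ha.2 (congrArg Subtype.val hxy))

/-- `C` is a pushout of `R'` and the pushout complement over `K'`. -/
theorem pod_C (ha : a.Injective) (hr : r.Injective) (hD : Dangling a r) :
    POGraph r (Yk a r ha hD) a (Yj a r hD) := by
  constructor
  · refine ⟨hr.1, (Yk_inj a r ha hr hD).1, ha.1, (Yj_inj a r hD).1, fun κ => rfl, ?_, ?_⟩
    · intro v
      by_cases hv : v ∈ delV a r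
      · obtain ⟨ρ, -, hρ2⟩ := hv
        exact Or.inl ⟨ρ, hρ2⟩
      · exact Or.inr ⟨⟨v, hv⟩, rfl⟩
    · rintro ρ ⟨v, hv⟩ hav
      have hρ : ρ ∈ Set.range r.fV := by
        by_contra hρ
        exact hv ⟨ρ, hρ, hav⟩
      obtain ⟨κ, rfl⟩ := hρ
      exact ⟨κ, rfl, Subtype.ext hav⟩
  · refine ⟨hr.2, (Yk_inj a r ha hr hD).2, ha.2, (Yj_inj a r hD).2, fun κ => rfl, ?_, ?_⟩
    · intro e
      by_cases he : e ∈ delE a r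
      · obtain ⟨ε, -, hε2⟩ := he
        exact Or.inl ⟨ε, hε2⟩
      · exact Or.inr ⟨⟨e, he⟩, rfl⟩
    · rintro ε ⟨e, he⟩ hae
      have hε : ε ∈ Set.range r.fE := by
        by_contra hε
        exact he ⟨ε, hε, hae⟩
      obtain ⟨κ, rfl⟩ := hε
      exact ⟨κ, rfl, Subtype.ext hae⟩

end Lconstr
/-! ### The L-construction -/

open Classical in
/-- Transferring a condition over the right-hand side of a rule to a condition
over the left-hand side. -/
noncomputable def Lc : {R' : DMGraph} → Cond R' → {K' L' : DMGraph} →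
    (l : GraphHom K' L') → (r : GraphHom K' R') →
    l.Injective → r.Injective → L'.Finite → Cond L'
  | _, .tru _, _, L', _, _, _, _, _ => .tru L'
  | _, .not c, _, _, l, r, hl, hr, hL' => .not (Lc c l r hl hr hL')
  | _, .and c₁ c₂, _, _, l, r, hl, hr, hL' =>
      .and (Lc c₁ l r hl hr hL') (Lc c₂ l r hl hr hL')
  | _, @Cond.ex _ C a hC ha c, _, L', l, r, hl, hr, hL' =>
      if hD : Dangling a r then
        Cond.ex (Pinl l (Yk a r ha hD))
          (PGraph_finite l (Yk a r ha hD) hL' (Ygraph_finite a r hD hC))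
          (Pinl_inj l (Yk a r ha hD))
          (Lc c (Pinr l (Yk a r ha hD) hl (Yk_inj a r ha hr hD)) (Yj a r hD)
            (Pinr_inj l (Yk a r ha hD) hl (Yk_inj a r ha hr hD)) (Yj_inj a r hD)
            (PGraph_finite l (Yk a r ha hD) hL' (Ygraph_finite a r hD hC)))
      else FalseCond L'
/-! ### Correctness of the L-construction -/

theorem compV {A B C : DMGraph} {f : GraphHom B C} {g : GraphHom A B} {h : GraphHom A C}
    (e : f.comp g = h) (x : A.V) : f.fV (g.fV x) = h.fV x :=
  congrFun (congrArg GraphHom.fV e) x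

theorem compE {A B C : DMGraph} {f : GraphHom B C} {g : GraphHom A B} {h : GraphHom A C}
    (e : f.comp g = h) (x : A.E) : f.fE (g.fE x) = h.fE x :=
  congrFun (congrArg GraphHom.fE e) x

/-- An injective morphism factors through another when its image is contained
in the range. -/
theorem factor_through {Y G D : DMGraph} (n : GraphHom Y G) (dG : GraphHom D G)
    (hdG : dG.Injective) (hV : ∀ v, n.fV v ∈ Set.range dG.fV)
    (hE : ∀ e, n.fE e ∈ Set.range dG.fE) :
    ∃ m : GraphHom Y D, dG.comp m = n := by
  choose mV hmV using hV
  choose mE hmE using hE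
  refine ⟨⟨mV, mE, ?_, ?_⟩, ?_⟩
  · intro e
    apply hdG.1
    rw [← dG.src, hmE, n.src, ← hmV]
  · intro e
    apply hdG.1
    rw [← dG.tgt, hmE, n.tgt, ← hmV]
  · apply GraphHom.ext'
    · funext v; exact hmV v
    · funext e; exact hmE e

theorem Lc_sat : ∀ {R' : DMGraph} (c : Cond R') {K' L' : DMGraph}
    (l : GraphHom K' L') (r : GraphHom K' R')
    (hl : l.Injective) (hr : r.Injective) (hL' : L'.Finite)
    {G H D : DMGraph} (g : GraphHom L' G) (h : GraphHom R' H) (k : GraphHom K' D)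
    (dG : GraphHom D G) (dH : GraphHom D H),
    g.Injective → h.Injective → IsPushoutSq l k g dG → IsPushoutSq r k h dH →
    (Sat g (Lc c l r hl hr hL') ↔ Sat h c) := by
  intro R' c
  induction c with
  | tru A => intros; simp [Lc, Sat]
  | not c ih =>
    intro K' L' l r hl hr hL' G H D g h k dG dH hg hh po1 po2
    simp only [Lc, Sat]
    rw [ih l r hl hr hL' g h k dG dH hg hh po1 po2]
  | and c₁ c₂ ih₁ ih₂ =>
    intro K' L' l r hl hr hL' G H D g h k dG dH hg hh po1 po2
    simp only [Lc, Sat]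
    rw [ih₁ l r hl hr hL' g h k dG dH hg hh po1 po2,
      ih₂ l r hl hr hL' g h k dG dH hg hh po1 po2]
  | ex a hC ha c ih =>
    rename_i R₀ C₀
    intro K' L' l r hl hr hL' G H D g h k dG dH hg hh po1 po2
    -- the interface morphism k is injective
    have hkV : Function.Injective k.fV := by
      apply Function.Injective.of_comp (f := dG.fV)
      have e1 : dG.fV ∘ k.fV = g.fV ∘ l.fV := (congrArg GraphHom.fV po1.comm).symm
      rw [e1]
      exact hg.1.comp hl.1
    have hkE : Function.Injective k.fE := by
      apply Function.Injective.of_comp (f := dG.fE)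
      have e1 : dG.fE ∘ k.fE = g.fE ∘ l.fE := (congrArg GraphHom.fE po1.comm).symm
      rw [e1]
      exact hg.2.comp hl.2
    have hk : k.Injective := ⟨hkV, hkE⟩
    have po1d : POGraph l k g dG := po1.poGraph hl hk
    have po2d : POGraph r k h dH := po2.poGraph hr hk
    have hdH : dH.Injective := ⟨po2d.1.inji, po2d.2.inji⟩
    have hdG : dG.Injective := ⟨po1d.1.inji, po1d.2.inji⟩
    simp only [Lc]
    by_cases hD : Dangling a r
    · rw [dif_pos hD]
      have hyk := Yk_inj a r ha hr hD
      have hyj := Yj_inj a r hD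
      have POf' : POGraph l (Yk a r ha hD) (Pinl l (Yk a r ha hD))
          (Pinr l (Yk a r ha hD) hl hyk) := PGraph_po l (Yk a r ha hD) hl hyk
      have podC : POGraph r (Yk a r ha hD) a (Yj a r hD) := pod_C a r ha hr hD
      set Y := Ygraph a r hD with hYdef
      set yj := Yj a r hD with hyjdef
      set yk := Yk a r ha hD with hykdef
      set a' := Pinl l (Yk a r ha hD) with ha'def
      set y' := Pinr l (Yk a r ha hD) hl hyk with hy'def
      simp only [Sat]
      constructor
      · -- from a match extension in G to a comatch extension in H
        rintro ⟨q', hq'_inj, hq'_comp, hq'_sat⟩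
        -- factor q' ∘ y' through dG
        have hVr : ∀ v, (q'.comp y').fV v ∈ Set.range dG.fV := by
          intro v
          by_cases hv : v ∈ Set.range yk.fV
          · obtain ⟨κ, rfl⟩ := hv
            refine ⟨k.fV κ, ?_⟩
            show dG.fV (k.fV κ) = q'.fV (y'.fV (yk.fV κ))
            rw [show dG.fV (k.fV κ) = g.fV (l.fV κ) from (compV po1.comm κ).symm,
              ← POf'.1.comm κ]
            exact (compV hq'_comp (l.fV κ)).symm
          · have hnot : q'.fV (y'.fV v) ∉ Set.range g.fV := by
              rintro ⟨x, hx⟩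
              rw [← compV hq'_comp x] at hx
              have := hq'_inj.1 hx
              obtain ⟨κ, -, hκ2⟩ := POf'.1.pull x v this
              exact hv ⟨κ, hκ2⟩
            rcases po1d.1.surj (q'.fV (y'.fV v)) with ⟨x, hx⟩ | ⟨δ, hδ⟩
            · exact absurd ⟨x, hx⟩ hnot
            · exact ⟨δ, hδ⟩
        have hEr : ∀ e, (q'.comp y').fE e ∈ Set.range dG.fE := by
          intro e
          by_cases hv : e ∈ Set.range yk.fE
          · obtain ⟨κ, rfl⟩ := hv
            refine ⟨k.fE κ, ?_⟩
            show dG.fE (k.fE κ) = q'.fE (y'.fE (yk.fE κ))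
            rw [show dG.fE (k.fE κ) = g.fE (l.fE κ) from (compE po1.comm κ).symm,
              ← POf'.2.comm κ]
            exact (compE hq'_comp (l.fE κ)).symm
          · have hnot : q'.fE (y'.fE e) ∉ Set.range g.fE := by
              rintro ⟨x, hx⟩
              rw [← compE hq'_comp x] at hx
              have := hq'_inj.2 hx
              obtain ⟨κ, -, hκ2⟩ := POf'.2.pull x e this
              exact hv ⟨κ, hκ2⟩
            rcases po1d.2.surj (q'.fE (y'.fE e)) with ⟨x, hx⟩ | ⟨δ, hδ⟩
            · exact absurd ⟨x, hx⟩ hnot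
            · exact ⟨δ, hδ⟩
        obtain ⟨m, hm⟩ := factor_through (q'.comp y') dG hdG hVr hEr
        have hn_inj : (q'.comp y').Injective :=
          hq'_inj.comp (Pinr_inj l yk hl hyk)
        have hm_inj : m.Injective := by
          constructor
          · apply Function.Injective.of_comp (f := dG.fV)
            rw [show dG.fV ∘ m.fV = (q'.comp y').fV from congrArg GraphHom.fV hm]
            exact hn_inj.1
          · apply Function.Injective.of_comp (f := dG.fE)
            rw [show dG.fE ∘ m.fE = (q'.comp y').fE from congrArg GraphHom.fE hm]
            exact hn_inj.2
        have hmyk : m.comp yk = k := by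
          apply GraphHom.ext'
          · funext κ
            apply hdG.1
            show dG.fV (m.fV (yk.fV κ)) = dG.fV (k.fV κ)
            rw [compV hm (yk.fV κ),
              show dG.fV (k.fV κ) = g.fV (l.fV κ) from (compV po1.comm κ).symm]
            show q'.fV (y'.fV (yk.fV κ)) = g.fV (l.fV κ)
            rw [← POf'.1.comm κ]
            exact compV hq'_comp (l.fV κ)
          · funext κ
            apply hdG.2
            show dG.fE (m.fE (yk.fE κ)) = dG.fE (k.fE κ)
            rw [compE hm (yk.fE κ),
              show dG.fE (k.fE κ) = g.fE (l.fE κ) from (compE po1.comm κ).symm]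
            show q'.fE (y'.fE (yk.fE κ)) = g.fE (l.fE κ)
            rw [← POf'.2.comm κ]
            exact compE hq'_comp (l.fE κ)
        -- build the comatch extension q : C₀ → H
        have poC : IsPushoutSq r yk a yj := podC.isPushoutSq
        have hcomm : h.comp r = (dH.comp m).comp yk := by
          rw [comp_assoc, hmyk]
          exact po2.comm
        obtain ⟨q, ⟨hqa, hqy⟩, -⟩ := poC.desc h (dH.comp m) hcomm
        -- right square over G is a pushout
        have pod1 : POGraph y' m q' dG := by
          constructor
          · refine POfun.paste POf'.1 hm_inj.1 ?_ (fun v => compV hm v |>.symm)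
            rw [show m.fV ∘ yk.fV = k.fV from congrArg GraphHom.fV hmyk,
              show q'.fV ∘ a'.fV = g.fV from congrArg GraphHom.fV hq'_comp]
            exact po1d.1
          · refine POfun.paste POf'.2 hm_inj.2 ?_ (fun v => compE hm v |>.symm)
            rw [show m.fE ∘ yk.fE = k.fE from congrArg GraphHom.fE hmyk,
              show q'.fE ∘ a'.fE = g.fE from congrArg GraphHom.fE hq'_comp]
            exact po1d.2
        -- right square over H is a pushout
        have pod2 : POGraph yj m q dH := by
          constructor
          · refine POfun.paste podC.1 hm_inj.1 ?_ (fun v => compV hqy v)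
            rw [show m.fV ∘ yk.fV = k.fV from congrArg GraphHom.fV hmyk,
              show q.fV ∘ a.fV = h.fV from congrArg GraphHom.fV hqa]
            exact po2d.1
          · refine POfun.paste podC.2 hm_inj.2 ?_ (fun v => compE hqy v)
            rw [show m.fE ∘ yk.fE = k.fE from congrArg GraphHom.fE hmyk,
              show q.fE ∘ a.fE = h.fE from congrArg GraphHom.fE hqa]
            exact po2d.2
        have hq_inj : q.Injective := ⟨pod2.1.injh, pod2.2.injh⟩
        refine ⟨q, hq_inj, hqa, ?_⟩
        exact (ih y' yj (Pinr_inj l yk hl hyk) hyj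
          (PGraph_finite l yk hL' (Ygraph_finite a r hD hC)) q' q m dG dH
          hq'_inj hq_inj pod1.isPushoutSq pod2.isPushoutSq).mp hq'_sat
      · -- from a comatch extension in H to a match extension in G
        rintro ⟨q, hq_inj, hq_comp, hq_sat⟩
        have hVr : ∀ v, (q.comp yj).fV v ∈ Set.range dH.fV := by
          rintro ⟨cv, hcv⟩
          show q.fV cv ∈ _
          by_cases hc : cv ∈ Set.range a.fV
          · obtain ⟨ρ, rfl⟩ := hc
            have hρ : ρ ∈ Set.range r.fV := by
              by_contra hρ
              exact hcv ⟨ρ, hρ, rfl⟩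
            obtain ⟨κ, rfl⟩ := hρ
            refine ⟨k.fV κ, ?_⟩
            show dH.fV (k.fV κ) = q.fV (yj.fV (yk.fV κ))
            rw [show dH.fV (k.fV κ) = h.fV (r.fV κ) from (compV po2.comm κ).symm]
            exact (compV hq_comp (r.fV κ)).symm
          · have hnot : q.fV cv ∉ Set.range h.fV := by
              rintro ⟨ρ, hρ⟩
              rw [← compV hq_comp ρ] at hρ
              exact hc ⟨ρ, hq_inj.1 hρ⟩
            rcases po2d.1.surj (q.fV cv) with ⟨ρ, hρ⟩ | ⟨δ, hδ⟩
            · exact absurd ⟨ρ, hρ⟩ hnot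
            · exact ⟨δ, hδ⟩
        have hEr : ∀ e, (q.comp yj).fE e ∈ Set.range dH.fE := by
          rintro ⟨ce, hce⟩
          show q.fE ce ∈ _
          by_cases hc : ce ∈ Set.range a.fE
          · obtain ⟨ε, rfl⟩ := hc
            have hε : ε ∈ Set.range r.fE := by
              by_contra hε
              exact hce ⟨ε, hε, rfl⟩
            obtain ⟨κ, rfl⟩ := hε
            refine ⟨k.fE κ, ?_⟩
            show dH.fE (k.fE κ) = q.fE (yj.fE (yk.fE κ))
            rw [show dH.fE (k.fE κ) = h.fE (r.fE κ) from (compE po2.comm κ).symm]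
            exact (compE hq_comp (r.fE κ)).symm
          · have hnot : q.fE ce ∉ Set.range h.fE := by
              rintro ⟨ε, hε⟩
              rw [← compE hq_comp ε] at hε
              exact hc ⟨ε, hq_inj.2 hε⟩
            rcases po2d.2.surj (q.fE ce) with ⟨ε, hε⟩ | ⟨δ, hδ⟩
            · exact absurd ⟨ε, hε⟩ hnot
            · exact ⟨δ, hδ⟩
        obtain ⟨m, hm⟩ := factor_through (q.comp yj) dH hdH hVr hEr
        have hn_inj : (q.comp yj).Injective := hq_inj.comp hyj
        have hm_inj : m.Injective := by
          constructor
          · apply Function.Injective.of_comp (f := dH.fV)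
            rw [show dH.fV ∘ m.fV = (q.comp yj).fV from congrArg GraphHom.fV hm]
            exact hn_inj.1
          · apply Function.Injective.of_comp (f := dH.fE)
            rw [show dH.fE ∘ m.fE = (q.comp yj).fE from congrArg GraphHom.fE hm]
            exact hn_inj.2
        have hmyk : m.comp yk = k := by
          apply GraphHom.ext'
          · funext κ
            apply hdH.1
            show dH.fV (m.fV (yk.fV κ)) = dH.fV (k.fV κ)
            rw [compV hm (yk.fV κ),
              show dH.fV (k.fV κ) = h.fV (r.fV κ) from (compV po2.comm κ).symm]
            show q.fV (yj.fV (yk.fV κ)) = h.fV (r.fV κ)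
            exact compV hq_comp (r.fV κ)
          · funext κ
            apply hdH.2
            show dH.fE (m.fE (yk.fE κ)) = dH.fE (k.fE κ)
            rw [compE hm (yk.fE κ),
              show dH.fE (k.fE κ) = h.fE (r.fE κ) from (compE po2.comm κ).symm]
            show q.fE (yj.fE (yk.fE κ)) = h.fE (r.fE κ)
            exact compE hq_comp (r.fE κ)
        -- build the match extension q' : C' → G
        have poC' : IsPushoutSq l yk a' y' := POf'.isPushoutSq
        have hcomm : g.comp l = (dG.comp m).comp yk := by
          rw [comp_assoc, hmyk]
          exact po1.comm
        obtain ⟨q', ⟨hq'a, hq'y⟩, -⟩ := poC'.desc g (dG.comp m) hcomm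
        have pod1 : POGraph y' m q' dG := by
          constructor
          · refine POfun.paste POf'.1 hm_inj.1 ?_ (fun v => compV hq'y v)
            rw [show m.fV ∘ yk.fV = k.fV from congrArg GraphHom.fV hmyk,
              show q'.fV ∘ a'.fV = g.fV from congrArg GraphHom.fV hq'a]
            exact po1d.1
          · refine POfun.paste POf'.2 hm_inj.2 ?_ (fun v => compE hq'y v)
            rw [show m.fE ∘ yk.fE = k.fE from congrArg GraphHom.fE hmyk,
              show q'.fE ∘ a'.fE = g.fE from congrArg GraphHom.fE hq'a]
            exact po1d.2
        have pod2 : POGraph yj m q dH := by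
          constructor
          · refine POfun.paste podC.1 hm_inj.1 ?_ (fun v => compV hm v |>.symm)
            rw [show m.fV ∘ yk.fV = k.fV from congrArg GraphHom.fV hmyk,
              show q.fV ∘ a.fV = h.fV from congrArg GraphHom.fV hq_comp]
            exact po2d.1
          · refine POfun.paste podC.2 hm_inj.2 ?_ (fun v => compE hm v |>.symm)
            rw [show m.fE ∘ yk.fE = k.fE from congrArg GraphHom.fE hmyk,
              show q.fE ∘ a.fE = h.fE from congrArg GraphHom.fE hq_comp]
            exact po2d.2
        have hq'_inj : q'.Injective := ⟨pod1.1.injh, pod1.2.injh⟩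
        refine ⟨q', hq'_inj, hq'a, ?_⟩
        exact (ih y' yj (Pinr_inj l yk hl hyk) hyj
          (PGraph_finite l yk hL' (Ygraph_finite a r hD hC)) q' q m dG dH
          hq'_inj hq_inj pod1.isPushoutSq pod2.isPushoutSq).mpr hq_sat
    · rw [dif_neg hD]
      simp only [Sat]
      constructor
      · intro hfalse
        exact absurd hfalse (sat_falseCond g)
      · rintro ⟨q, hq_inj, hq_comp, -⟩
        exfalso
        apply hD
        intro e he
        constructor
        · rintro ⟨ρ, hρ, hρ2⟩
          by_cases hea : e ∈ Set.range a.fE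
          · obtain ⟨ε, rfl⟩ := hea
            have hε : ε ∈ Set.range r.fE := by
              by_contra hε
              exact he ⟨ε, hε, rfl⟩
            obtain ⟨κ, rfl⟩ := hε
            apply hρ
            have hav : a.fV ρ = a.fV (r.fV (K'.s κ)) := by
              rw [hρ2, a.src, r.src]
            exact ⟨K'.s κ, (ha.1 hav).symm⟩
          · have hqe : q.fE e ∉ Set.range h.fE := by
              rintro ⟨ε, hε⟩
              rw [← compE hq_comp ε] at hε
              exact hea ⟨ε, hq_inj.2 hε⟩
            rcases po2d.2.surj (q.fE e) with ⟨ε, hε⟩ | ⟨δ, hδ⟩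
            · exact hqe ⟨ε, hε⟩
            · have h1 : h.fV ρ = dH.fV (D.s δ) := by
                rw [← compV hq_comp ρ, hρ2, ← q.src e, ← hδ, dH.src]
              obtain ⟨κ, hκ1, -⟩ := po2d.1.pull ρ (D.s δ) h1
              exact hρ ⟨κ, hκ1⟩
        · rintro ⟨ρ, hρ, hρ2⟩
          by_cases hea : e ∈ Set.range a.fE
          · obtain ⟨ε, rfl⟩ := hea
            have hε : ε ∈ Set.range r.fE := by
              by_contra hε
              exact he ⟨ε, hε, rfl⟩
            obtain ⟨κ, rfl⟩ := hε
            apply hρ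
            have hav : a.fV ρ = a.fV (r.fV (K'.t κ)) := by
              rw [hρ2, a.tgt, r.tgt]
            exact ⟨K'.t κ, (ha.1 hav).symm⟩
          · have hqe : q.fE e ∉ Set.range h.fE := by
              rintro ⟨ε, hε⟩
              rw [← compE hq_comp ε] at hε
              exact hea ⟨ε, hq_inj.2 hε⟩
            rcases po2d.2.surj (q.fE e) with ⟨ε, hε⟩ | ⟨δ, hδ⟩
            · exact hqe ⟨ε, hε⟩
            · have h1 : h.fV ρ = dH.fV (D.t δ) := by
                rw [← compV hq_comp ρ, hρ2, ← q.tgt e, ← hδ, dH.tgt]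
              obtain ⟨κ, hκ1, -⟩ := po2d.1.pull ρ (D.t δ) h1
              exact hρ ⟨κ, hκ1⟩
theorem emptyHom_injective (G : DMGraph) : (emptyHom G).Injective :=
  ⟨fun a => a.elim, fun a => a.elim⟩
/-- Constraint-preserving application conditions: for a rule `p = ⟨L ↩l K ↪r R⟩` of
finite directed multigraphs and a constraint `d`, there is a condition `ac` over `L`
such that for every direct transformation `G ⇒_{p,g,h} H`, the match `g` satisfies
`ac` iff (`G ⊨ d` implies `H ⊨ d`).  In particular, the rule equipped with `ac`
is `d`-preserving. -/
theorem cpres_exists {K L R : DMGraph} (hL : L.Finite) (hK : K.Finite) (hR : R.Finite)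
    (l : GraphHom K L) (hl : l.Injective) (r : GraphHom K R) (hr : r.Injective)
    (d : Cond DMGraph.empty) :
    ∃ ac : Cond L,
      (∀ (G H D : DMGraph) (g : GraphHom L G) (h : GraphHom R H) (k : GraphHom K D)
        (dG : GraphHom D G) (dH : GraphHom D H),
        g.Injective → h.Injective →
        IsPushoutSq l k g dG → IsPushoutSq r k h dH →
        (Sat g ac ↔ (GSat G d → GSat H d))) ∧
      (∀ (G H D : DMGraph) (g : GraphHom L G) (h : GraphHom R H) (k : GraphHom K D)
        (dG : GraphHom D G) (dH : GraphHom D H),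
        g.Injective → h.Injective →
        IsPushoutSq l k g dG → IsPushoutSq r k h dH →
        Sat g ac → GSat G d → GSat H d) := by
  have main : ∀ (G H D : DMGraph) (g : GraphHom L G) (h : GraphHom R H) (k : GraphHom K D)
      (dG : GraphHom D G) (dH : GraphHom D H),
      g.Injective → h.Injective →
      IsPushoutSq l k g dG → IsPushoutSq r k h dH →
      (Sat g (Cond.not (Cond.and (Shift d (emptyHom L) hL)
          (Cond.not (Lc (Shift d (emptyHom R) hR) l r hl hr hL)))) ↔
        (GSat G d → GSat H d)) := by
    intro G H D g h k dG dH hg hh po1 po2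
    have h1 : Sat g (Shift d (emptyHom L) hL) ↔ GSat G d := by
      rw [Shift_sat d (emptyHom L) hL g hg,
        emptyHom_unique (g.comp (emptyHom L)) (emptyHom G)]
      exact Iff.rfl
    have h2 : Sat g (Lc (Shift d (emptyHom R) hR) l r hl hr hL) ↔ GSat H d := by
      rw [Lc_sat (Shift d (emptyHom R) hR) l r hl hr hL g h k dG dH hg hh po1 po2,
        Shift_sat d (emptyHom R) hR h hh,
        emptyHom_unique (h.comp (emptyHom R)) (emptyHom H)]
      exact Iff.rfl
    simp only [Sat]
    rw [h1, h2]
    tauto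
  refine ⟨Cond.not (Cond.and (Shift d (emptyHom L) hL)
      (Cond.not (Lc (Shift d (emptyHom R) hR) l r hl hr hL))), ?_, ?_⟩
  · intro G H D g h k dG dH hg hh po1 po2
    exact main G H D g h k dG dH hg hh po1 po2
  · intro G H D g h k dG dH hg hh po1 po2 hac
    exact (main G H D g h k dG dH hg hh po1 po2).mp hac
end

section
/- Repair of a negative constraint by deletion (basic repair, ∄-case): let C be a finite directed multigraph with at least one node. Define the deletion step relation ▷ on finite directed multigraphs by: G ▷ H iff there is an injective morphism q : C → G and either (if C has at least one edge) H is obtained from G by removing a single edge in the image of q, or (if C has no edges) H is obtained from G by removing a single node in the image of q together with all edges incident to it. Then: (1) ▷ is terminating — there is no infinite sequence G_0 ▷ G_1 ▷ G_2 ▷ ⋯ of finite graphs; and (2) a finite graph G admits no ▷-step if and only if there is no injective morphism C → G. Hence iterating deletion steps from any finite graph terminates in a graph satisfying the negative constraint ∄C, and a graph already satisfying ∄C is left unchanged. -/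
/-- The graph obtained from `G` by removing the single edge `e₀`. -/
def removeEdge (G : DMGraph) (e₀ : G.E) : DMGraph where
  V := G.V
  E := {e : G.E // e ≠ e₀}
  s e := G.s e.1
  t e := G.t e.1

/-- The graph obtained from `G` by removing the single node `v₀` together with all
edges incident to it. -/
def removeNode (G : DMGraph) (v₀ : G.V) : DMGraph where
  V := {v : G.V // v ≠ v₀}
  E := {e : G.E // G.s e ≠ v₀ ∧ G.t e ≠ v₀}
  s e := ⟨G.s e.1, e.2.1⟩
  t e := ⟨G.t e.1, e.2.2⟩

/-- The deletion step relation for the negative constraint `∄C`: `DelStep C G H` iff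
there is an injective morphism `q : C → G` and either (if `C` has at least one edge)
`H` is obtained from `G` by removing a single edge in the image of `q`, or (if `C`
has no edges) `H` is obtained from `G` by removing a single node in the image of `q`
together with all edges incident to it. -/
def DelStep (C G H : DMGraph) : Prop :=
  ∃ q : GraphHom C G, q.Injective ∧
    ((∃ e : C.E, H = removeEdge G (q.fE e)) ∨
     (IsEmpty C.E ∧ ∃ v : C.V, H = removeNode G (q.fV v)))

/-- The measure used for termination: number of nodes plus number of edges. -/
noncomputable def gmeasure (G : DMGraph) : ℕ := Nat.card G.V + Nat.card G.E

lemma delstep_measure_lt {C G H : DMGraph} (hG : G.Finite) (h : DelStep C G H) :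
    gmeasure H < gmeasure G := by
  obtain ⟨hV, hE⟩ := hG
  obtain ⟨q, _, hcase | ⟨_, v, rfl⟩⟩ := h
  · obtain ⟨e, rfl⟩ := hcase
    have h1 : Nat.card (removeEdge G (q.fE e)).E < Nat.card G.E :=
      Finite.card_subtype_lt (x := q.fE e) (by simp)
    have h2 : Nat.card (removeEdge G (q.fE e)).V = Nat.card G.V := rfl
    simp only [gmeasure, h2]
    omega
  · have h1 : Nat.card (removeNode G (q.fV v)).V < Nat.card G.V :=
      Finite.card_subtype_lt (x := q.fV v) (by simp)
    have h2 : Nat.card (removeNode G (q.fV v)).E ≤ Nat.card G.E :=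
      Finite.card_subtype_le _
    simp only [gmeasure]
    omega

/-- Basic repair for a negative constraint `∄C`, where `C` is a finite graph with at
least one node: (1) the deletion step relation is terminating on finite graphs, and
(2) a finite graph admits no deletion step iff there is no injective morphism
`C → G`, i.e. iff it satisfies `∄C`. -/
theorem delete_repair (C : DMGraph) (hC : C.Finite) (hCV : Nonempty C.V) :
    (¬ ∃ f : ℕ → DMGraph, (∀ n, (f n).Finite) ∧ ∀ n, DelStep C (f n) (f (n + 1))) ∧
    (∀ G : DMGraph, G.Finite →
      ((¬ ∃ H, DelStep C G H) ↔ ¬ ∃ q : GraphHom C G, q.Injective)) := by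
  constructor
  · rintro ⟨f, hfin, hstep⟩
    have hdec : ∀ n, gmeasure (f (n + 1)) < gmeasure (f n) := fun n =>
      delstep_measure_lt (hfin n) (hstep n)
    have hle : ∀ n, gmeasure (f n) + n ≤ gmeasure (f 0) := by
      intro n
      induction n with
      | zero => simp
      | succ k ih => have := hdec k; omega
    have := hle (gmeasure (f 0) + 1)
    omega
  · intro G _
    constructor
    · intro hno
      rintro ⟨q, hq⟩
      apply hno
      by_cases hE : Nonempty C.E
      · obtain ⟨e⟩ := hE
        exact ⟨removeEdge G (q.fE e), q, hq, Or.inl ⟨e, rfl⟩⟩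
      · obtain ⟨v⟩ := hCV
        exact ⟨removeNode G (q.fV v), q, hq,
          Or.inr ⟨not_nonempty_iff.mp hE, v, rfl⟩⟩
    · rintro hno ⟨H, q, hq, _⟩
      exact hno ⟨q, hq⟩
end
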